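/- Let G be an infinite locally finite connected simple graph and let (ω(e))_{e ∈ E(G)} be independent uniform [0,1] random variables on the edges. Define ξ(x) := (∑_{e ∋ x} ω(e)) mod 1 for each vertex x. Then the family (ξ(x))_{x ∈ V(G)} is a collection of independent uniform [0,1] random variables. -/

import Mathlib

open MeasureTheory
open ProbabilityTheory
open scoped Classical

lemma fract_add_map_unif (c : ℝ) :
    Measure.map (fun u => Int.fract (u + c)) (volume.restrict (Set.Icc (0:ℝ) 1)) =
      volume.restrict (Set.Icc (0:ℝ) 1) := by
  have hkey : ∀ c : ℝ, 0 ≤ c → c < 1 →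
      Measure.map (fun u => Int.fract (u + c)) (volume.restrict (Set.Icc (0:ℝ) 1)) =
      volume.restrict (Set.Icc (0:ℝ) 1) := by
    intro c hc0 hc1
    have hmeas : Measurable fun u : ℝ => Int.fract (u + c) :=
      (measurable_id.add_const c).fract
    ext s hs
    rw [Measure.map_apply hmeas hs, Measure.restrict_apply hs,
      Measure.restrict_apply (hmeas hs)]
    have hfr2 : ∀ u : ℝ, 1 - c ≤ u → u ≤ 1 → Int.fract (u + c) = u + (c - 1) := by
      intro u h1 h2
      have hh : u + (c - 1) + (1 : ℤ) = u + c := by push_cast; ring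
      rw [← hh, Int.fract_add_intCast, Int.fract_eq_self]
      constructor <;> [linarith; linarith]
    have hsplit : (fun u : ℝ => Int.fract (u + c)) ⁻¹' s ∩ Set.Icc 0 1 =
        ((fun u : ℝ => u + c) ⁻¹' (s ∩ Set.Ico c 1)) ∪
        ((fun u : ℝ => u + (c - 1)) ⁻¹' (s ∩ Set.Icc 0 c)) := by
      ext u
      simp only [Set.mem_inter_iff, Set.mem_preimage, Set.mem_union, Set.mem_Icc, Set.mem_Ico]
      constructor
      · rintro ⟨hus, hu0, hu1⟩
        by_cases h : u + c < 1
        · have he : Int.fract (u + c) = u + c := Int.fract_eq_self.2 ⟨by linarith, h⟩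
          exact Or.inl ⟨by rwa [he] at hus, by linarith, h⟩
        · have he := hfr2 u (by linarith) hu1
          exact Or.inr ⟨by rwa [he] at hus, by linarith, by linarith⟩
      · rintro (⟨hus, h1, h2⟩ | ⟨hus, h1, h2⟩)
        · have he : Int.fract (u + c) = u + c := Int.fract_eq_self.2 ⟨by linarith, h2⟩
          exact ⟨by rwa [he], by linarith, by linarith⟩
        · have he := hfr2 u (by linarith) (by linarith)
          exact ⟨by rwa [he], by linarith, by linarith⟩
    rw [hsplit, measure_union ?hdisj ((measurable_add_const (c - 1)) (hs.inter measurableSet_Icc))]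
    case hdisj =>
      rw [Set.disjoint_left]
      rintro u ⟨_, _, h2⟩ ⟨_, h3, _⟩
      simp only [Set.mem_Ico, Set.mem_Icc] at *
      linarith
    rw [measure_preimage_add_right, measure_preimage_add_right]
    have e1 : volume (s ∩ Set.Ico c 1) = volume (s ∩ Set.Ioc c 1) :=
      measure_congr (Filter.EventuallyEq.rfl.inter Ico_ae_eq_Ioc)
    rw [e1, add_comm, ← measure_union ?hd2 (hs.inter measurableSet_Ioc),
      ← Set.inter_union_distrib_left, Set.Icc_union_Ioc_eq_Icc hc0 hc1.le]
    case hd2 =>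
      rw [Set.disjoint_left]
      rintro u ⟨_, _, h2⟩ ⟨_, h3, _⟩
      linarith
  have heq : (fun u : ℝ => Int.fract (u + c)) = fun u => Int.fract (u + Int.fract c) := by
    funext u
    have hh : u + Int.fract c + (⌊c⌋ : ℤ) = u + c := by
      rw [Int.fract]; push_cast; ring
    rw [← hh, Int.fract_add_intCast]
  rw [heq]
  exact hkey _ (Int.fract_nonneg c) (Int.fract_lt_one c)

lemma fresh_uniform {Ω β : Type*} [MeasurableSpace Ω] [MeasurableSpace β]
    {P : Measure Ω} [IsProbabilityMeasure P] {U : Ω → ℝ} {W : Ω → β}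
    (hU : Measurable U) (hW : Measurable W) (hUW : IndepFun U W P)
    (hunif : Measure.map U P = volume.restrict (Set.Icc (0:ℝ) 1))
    {g : β → ℝ} (hg : Measurable g) :
    Measure.map (fun a => (W a, Int.fract (U a + g (W a)))) P =
      (Measure.map W P).prod (volume.restrict (Set.Icc (0:ℝ) 1)) := by
  have hprodmap : Measure.map (fun a => (W a, U a)) P
      = (Measure.map W P).prod (Measure.map U P) :=
    (indepFun_iff_map_prod_eq_prod_map_map hW.aemeasurable hU.aemeasurable).mp hUW.symm
  have hφ : Measurable fun p : β × ℝ => (p.1, Int.fract (p.2 + g p.1)) :=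
    measurable_fst.prodMk ((measurable_snd.add (hg.comp measurable_fst)).fract)
  have hPW : IsProbabilityMeasure (Measure.map W P) := Measure.isProbabilityMeasure_map hW.aemeasurable
  have hsp : MeasurePreserving (fun p : β × ℝ => (p.1, Int.fract (p.2 + g p.1)))
      ((Measure.map W P).prod (volume.restrict (Set.Icc (0:ℝ) 1)))
      ((Measure.map W P).prod (volume.restrict (Set.Icc (0:ℝ) 1))) := by
    exact MeasurePreserving.skew_product (f := id)
      (g := fun (w : β) (u : ℝ) => Int.fract (u + g w))
      (MeasurePreserving.id (Measure.map W P))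
      ((measurable_snd.add (hg.comp measurable_fst)).fract)
      (Filter.Eventually.of_forall fun w => fract_add_map_unif (g w))
  calc Measure.map (fun a => (W a, Int.fract (U a + g (W a)))) P
      = Measure.map ((fun p : β × ℝ => (p.1, Int.fract (p.2 + g p.1)))
          ∘ fun a => (W a, U a)) P := rfl
    _ = Measure.map (fun p : β × ℝ => (p.1, Int.fract (p.2 + g p.1)))
          (Measure.map (fun a => (W a, U a)) P) :=
        (Measure.map_map hφ (hW.prodMk hU)).symm
    _ = (Measure.map W P).prod (volume.restrict (Set.Icc (0:ℝ) 1)) := by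
        rw [hprodmap, hunif]; exact hsp.map_eq

/-- Given uniform labels `ω e` on the edges of a locally finite graph, the value
`ξ x := (∑_{e ∋ x} ω e) mod 1` at a vertex `x`. -/
noncomputable def vertexLabel {V : Type*} [DecidableEq V] (G : SimpleGraph V)
    [G.LocallyFinite] {Ω : Type*} (ω : G.edgeSet → Ω → ℝ) (x : V) (a : Ω) : ℝ :=
  Int.fract (∑ e ∈ G.incidenceFinset x,
    if h : e ∈ G.edgeSet then ω ⟨e, h⟩ a else 0)

lemma exists_boundary_edge {V : Type*} [DecidableEq V] [Infinite V] (G : SimpleGraph V)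
    (hconn : G.Connected) [G.LocallyFinite] (s : Finset V) (hs : s.Nonempty) :
    ∃ x ∈ s, ∃ e : G.edgeSet, (e : Sym2 V) ∈ G.incidenceFinset x ∧
      ∀ y ∈ s, y ≠ x → (e : Sym2 V) ∉ G.incidenceFinset y := by
  obtain ⟨x0, hx0⟩ := hs
  obtain ⟨v, hv⟩ := Infinite.exists_notMem_finset s
  obtain ⟨w⟩ := hconn.preconnected x0 v
  obtain ⟨d, _, hd1, hd2⟩ := w.exists_boundary_dart (s : Set V) hx0 hv
  refine ⟨d.fst, hd1, ⟨s(d.fst, d.snd), d.adj⟩, ?_, ?_⟩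
  · rw [SimpleGraph.mem_incidenceFinset]
    exact ⟨d.adj, Sym2.mem_mk_left _ _⟩
  · intro y hy hyne hmem
    rw [SimpleGraph.mem_incidenceFinset] at hmem
    have h2 := hmem.2
    rw [Sym2.mem_iff] at h2
    rcases h2 with h | h
    · exact hyne h
    · exact hd2 (by simpa [← h] using hy)

lemma vertexLabel_eq_sum {V : Type*} [DecidableEq V] (G : SimpleGraph V) [G.LocallyFinite]
    {Ω : Type*} (ω : G.edgeSet → Ω → ℝ) (y : V) (a : Ω) :
    vertexLabel G ω y a =
      Int.fract (∑ f ∈ (G.incidenceFinset y).subtype (· ∈ G.edgeSet), ω f a) := by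
  rw [vertexLabel]
  congr 1
  refine Finset.sum_bij'
    (fun e he => (⟨e, G.incidenceSet_subset y ((G.mem_incidenceFinset y e).mp he)⟩ : G.edgeSet))
    (fun f _ => (f : Sym2 V)) ?_ ?_ ?_ ?_ ?_
  · intro e he
    simp [Finset.mem_subtype, he]
  · intro f hf
    simpa [Finset.mem_subtype] using hf
  · intro e he; rfl
  · intro f hf; rfl
  · intro e he
    exact dif_pos _

lemma vertexLabel_measurable {V : Type*} [DecidableEq V] (G : SimpleGraph V) [G.LocallyFinite]
    {Ω : Type*} [MeasurableSpace Ω] (ω : G.edgeSet → Ω → ℝ) (hmeas : ∀ e, Measurable (ω e))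
    (x : V) : Measurable (vertexLabel G ω x) := by
  unfold vertexLabel
  apply Measurable.fract
  apply Finset.measurable_sum
  intro e he
  by_cases h : e ∈ G.edgeSet
  · simpa [dif_pos h] using hmeas ⟨e, h⟩
  · simp [dif_neg h]

lemma key_map {V : Type*} [DecidableEq V] (G : SimpleGraph V) [G.LocallyFinite]
    {Ω : Type*} [MeasurableSpace Ω] (P : Measure Ω) [IsProbabilityMeasure P]
    (ω : G.edgeSet → Ω → ℝ) (hmeas : ∀ e, Measurable (ω e))
    (hindep : ProbabilityTheory.iIndepFun ω P)
    (hunif : ∀ e, Measure.map (ω e) P = volume.restrict (Set.Icc (0 : ℝ) 1))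
    (s : Finset V) (x : V) (hx : x ∈ s) (e : G.edgeSet)
    (he : (e : Sym2 V) ∈ G.incidenceFinset x)
    (hnot : ∀ y ∈ s, y ≠ x → (e : Sym2 V) ∉ G.incidenceFinset y) :
    ∃ (K : Finset G.edgeSet) (W : Ω → (K → ℝ)) (h : V → (K → ℝ) → ℝ),
      Measurable W ∧ (∀ y, Measurable (h y)) ∧
      (∀ y ∈ s, y ≠ x → vertexLabel G ω y = fun a => h y (W a)) ∧
      Measure.map (fun a => (W a, vertexLabel G ω x a)) P =
        (Measure.map W P).prod (volume.restrict (Set.Icc (0:ℝ) 1)) := by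
  set K : Finset G.edgeSet :=
    ((s.biUnion fun z => G.incidenceFinset z).subtype (· ∈ G.edgeSet)).erase e with hK
  have heK : e ∉ K := Finset.notMem_erase _ _
  set W : Ω → (K → ℝ) := fun a (f : K) => ω (f : G.edgeSet) a with hW
  set h : V → (K → ℝ) → ℝ := fun y u =>
    Int.fract (∑ f : K, if ((f : G.edgeSet) : Sym2 V) ∈ G.incidenceFinset y then u f else 0)
    with hh
  have hWmeas : Measurable W := measurable_pi_lambda _ fun f => hmeas _
  have hhmeas : ∀ y, Measurable (h y) := by
    intro y
    apply Measurable.fract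
    apply Finset.measurable_sum
    intro f _
    by_cases hf : ((f : G.edgeSet) : Sym2 V) ∈ G.incidenceFinset y
    · simpa [hf] using measurable_pi_apply f
    · simp [hf]
  -- the filter description of incidence subtypes
  have hJ : ∀ y ∈ s, y ≠ x →
      (G.incidenceFinset y).subtype (· ∈ G.edgeSet) =
        K.filter (fun f => ((f : G.edgeSet) : Sym2 V) ∈ G.incidenceFinset y) := by
    intro y hy hyx
    ext f
    simp only [Finset.mem_subtype, Finset.mem_filter, hK, Finset.mem_erase, Finset.mem_biUnion]
    constructor
    · intro hf
      refine ⟨⟨?_, ?_⟩, hf⟩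
      · rintro rfl; exact hnot y hy hyx hf
      · exact ⟨y, hy, hf⟩
    · rintro ⟨_, hf⟩; exact hf
  have hJx : (G.incidenceFinset x).subtype (· ∈ G.edgeSet) =
      insert e (K.filter (fun f => ((f : G.edgeSet) : Sym2 V) ∈ G.incidenceFinset x)) := by
    ext f
    simp only [Finset.mem_subtype, Finset.mem_insert, Finset.mem_filter, hK, Finset.mem_erase,
      Finset.mem_biUnion]
    constructor
    · intro hf
      by_cases hfe : f = e
      · exact Or.inl hfe
      · exact Or.inr ⟨⟨hfe, ⟨x, hx, hf⟩⟩, hf⟩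
    · rintro (rfl | ⟨_, hf⟩)
      · exact he
      · exact hf
  -- sums over K
  have hsumK : ∀ (y : V) (a : Ω),
      h y (W a) = Int.fract (∑ f ∈ K.filter
        (fun f => ((f : G.edgeSet) : Sym2 V) ∈ G.incidenceFinset y), ω f a) := by
    intro y a
    simp only [hh, hW]
    congr 1
    rw [Finset.sum_filter]
    exact Finset.sum_finset_coe (fun f => if ((f : G.edgeSet) : Sym2 V) ∈ G.incidenceFinset y
      then ω f a else 0) K
  refine ⟨K, W, h, hWmeas, hhmeas, ?_, ?_⟩
  · intro y hy hyx
    funext a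
    rw [vertexLabel_eq_sum, hJ y hy hyx, hsumK]
  · -- the fresh-uniform part
    have hg : Measurable fun u : K → ℝ =>
        ∑ f : K, if ((f : G.edgeSet) : Sym2 V) ∈ G.incidenceFinset x then u f else 0 := by
      apply Finset.measurable_sum
      intro f _
      by_cases hf : ((f : G.edgeSet) : Sym2 V) ∈ G.incidenceFinset x
      · simpa [hf] using measurable_pi_apply f
      · simp [hf]
    have hUW : IndepFun (ω e) W P := by
      have hD : Disjoint ({e} : Finset G.edgeSet) K := by
        simp [Finset.disjoint_singleton_left, heK]
      have h2 := hindep.indepFun_finset {e} K hD hmeas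
      exact h2.comp (measurable_pi_apply (⟨e, Finset.mem_singleton_self e⟩ :
        ({e} : Finset G.edgeSet))) measurable_id
    have hfr := fresh_uniform (hmeas e) hWmeas hUW (hunif e) hg
    have hxlab : vertexLabel G ω x = fun a =>
        Int.fract (ω e a + (fun u : K → ℝ => ∑ f : K,
          if ((f : G.edgeSet) : Sym2 V) ∈ G.incidenceFinset x then u f else 0) (W a)) := by
      funext a
      rw [vertexLabel_eq_sum, hJx, Finset.sum_insert (by simp [heK])]
      simp only [hW]
      congr 2
      rw [Finset.sum_filter]
      exact (Finset.sum_finset_coe (fun f => if ((f : G.edgeSet) : Sym2 V) ∈ G.incidenceFinset x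
        then ω f a else 0) K).symm
    rw [hxlab]
    exact hfr

/-- Let `G` be an infinite, locally finite, connected simple graph with
independent uniform-`[0,1]` random variables `ω e` on the edges. Then the
variables `ξ x := (∑_{e ∋ x} ω e) mod 1`, for `x ∈ V`, are independent and
uniform on `[0,1]`. -/
theorem vertexLabel_iid_uniform
    {V : Type*} [DecidableEq V] [Infinite V] (G : SimpleGraph V)
    (hconn : G.Connected) [G.LocallyFinite]
    {Ω : Type*} [MeasurableSpace Ω] (P : Measure Ω) [IsProbabilityMeasure P]
    (ω : G.edgeSet → Ω → ℝ)
    (hmeas : ∀ e, Measurable (ω e))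
    (hindep : ProbabilityTheory.iIndepFun ω P)
    (hunif : ∀ e, Measure.map (ω e) P = volume.restrict (Set.Icc (0 : ℝ) 1)) :
    ProbabilityTheory.iIndepFun (vertexLabel G ω) P ∧
      ∀ x : V, Measure.map (vertexLabel G ω x) P =
        volume.restrict (Set.Icc (0 : ℝ) 1) := by
  have hξmeas : ∀ x, Measurable (vertexLabel G ω x) := vertexLabel_measurable G ω hmeas
  -- marginals
  have hmarg : ∀ x : V, Measure.map (vertexLabel G ω x) P =
      volume.restrict (Set.Icc (0 : ℝ) 1) := by
    intro x
    obtain ⟨x', hx', e, he, hnot⟩ :=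
      exists_boundary_edge G hconn {x} ⟨x, Finset.mem_singleton_self x⟩
    rw [Finset.mem_singleton] at hx'
    subst hx'
    obtain ⟨K, W, h, hWmeas, hhmeas, _, hmap⟩ :=
      key_map G P ω hmeas hindep hunif {x'} x' (Finset.mem_singleton_self x') e he hnot
    have hps : vertexLabel G ω x' = Prod.snd ∘ (fun a => (W a, vertexLabel G ω x' a)) := rfl
    have hPW : IsProbabilityMeasure (Measure.map W P) :=
      Measure.isProbabilityMeasure_map hWmeas.aemeasurable
    rw [hps, ← Measure.map_map measurable_snd (hWmeas.prodMk (hξmeas x')), hmap,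
      Measure.map_snd_prod, measure_univ, one_smul]
  refine ⟨?_, hmarg⟩
  rw [iIndepFun_iff_measure_inter_preimage_eq_mul]
  intro S
  induction S using Finset.strongInduction with
  | _ S ih =>
    intro sets hsets
    rcases S.eq_empty_or_nonempty with rfl | hS
    · simp
    obtain ⟨x, hx, e, he, hnot⟩ := exists_boundary_edge G hconn S hS
    obtain ⟨K, W, h, hWmeas, hhmeas, hfac, hmap⟩ :=
      key_map G P ω hmeas hindep hunif S x hx e he hnot
    set S' := S.erase x with hS'
    set C : Set (K → ℝ) := ⋂ i ∈ S', h i ⁻¹' sets i with hC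
    have hCmeas : MeasurableSet C :=
      MeasurableSet.biInter S'.countable_toSet
        (fun i hi => (hhmeas i) (hsets i (Finset.mem_of_mem_erase hi)))
    have hCpre : (⋂ i ∈ S', vertexLabel G ω i ⁻¹' sets i) = W ⁻¹' C := by
      rw [hC, Set.preimage_iInter₂]
      exact Set.iInter₂_congr fun i hi => by
        rw [hfac i (Finset.mem_of_mem_erase hi) (Finset.ne_of_mem_erase hi)]; rfl
    have hsplit : (⋂ i ∈ S, vertexLabel G ω i ⁻¹' sets i) =
        (fun a => (W a, vertexLabel G ω x a)) ⁻¹' (C ×ˢ sets x) := by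
      rw [← Finset.insert_erase hx, Finset.set_biInter_insert, ← hS', hCpre]
      ext a
      simp only [Set.mem_inter_iff, Set.mem_preimage, Set.mem_prod]
      exact and_comm
    rw [hsplit, ← Measure.map_apply (hWmeas.prodMk (hξmeas x)) (hCmeas.prod (hsets x hx)),
      hmap, Measure.prod_prod]
    have h1 : Measure.map W P C = ∏ i ∈ S', P (vertexLabel G ω i ⁻¹' sets i) := by
      rw [Measure.map_apply hWmeas hCmeas, ← hCpre]
      exact ih S' (Finset.erase_ssubset hx) (fun i hi => hsets i (Finset.mem_of_mem_erase hi))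
    have h2 : volume.restrict (Set.Icc (0:ℝ) 1) (sets x) =
        P (vertexLabel G ω x ⁻¹' sets x) := by
      rw [← hmarg x, Measure.map_apply (hξmeas x) (hsets x hx)]
    rw [h1, h2, mul_comm]
    exact Finset.mul_prod_erase S (fun i => P (vertexLabel G ω i ⁻¹' sets i)) hx
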